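/- Let H be a real Hilbert space and let R, W ⊆ H with R bounded and W weakly compact. Then the pseudometric space (W, d_R) is complete: every sequence in W that is Cauchy with respect to d_R has a limit in W with respect to d_R. -/

import Mathlib

open scoped InnerProductSpace
open Filter

noncomputable section

/-- The seminorm `‖x‖_R = sup_{r ∈ R} |⟨r,x⟩|` associated to a bounded set `R`. -/
def normR {H : Type*} [NormedAddCommGroup H] [InnerProductSpace ℝ H] (R : Set H) (x : H) : ℝ :=
  ⨆ r : R, |⟪(r : H), x⟫_ℝ|

/-- The pseudometric `d_R(x,y) = ‖x - y‖_R`. -/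
def dR {H : Type*} [NormedAddCommGroup H] [InnerProductSpace ℝ H] (R : Set H) (x y : H) : ℝ :=
  normR R (x - y)

lemma normR_bdd {H : Type*} [NormedAddCommGroup H] [InnerProductSpace ℝ H] {R : Set H}
    (hR : Bornology.IsBounded R) (x : H) :
    BddAbove (Set.range fun r : R => |⟪(r : H), x⟫_ℝ|) := by
  obtain ⟨C, hC⟩ := hR.exists_norm_le
  refine ⟨C * ‖x‖, ?_⟩
  rintro _ ⟨r, rfl⟩
  calc |⟪(r : H), x⟫_ℝ| ≤ ‖(r : H)‖ * ‖x‖ := abs_real_inner_le_norm _ _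
    _ ≤ C * ‖x‖ := by gcongr; exact hC r r.2

lemma abs_inner_le_normR {H : Type*} [NormedAddCommGroup H] [InnerProductSpace ℝ H] {R : Set H}
    (hR : Bornology.IsBounded R) {r : H} (hr : r ∈ R) (x : H) :
    |⟪r, x⟫_ℝ| ≤ normR R x :=
  le_ciSup (normR_bdd hR x) ⟨r, hr⟩

/-- Let `H` be a real Hilbert space and `R, W ⊆ H` with `R` bounded and `W`
weakly compact.  Then the pseudometric space `(W, d_R)` is complete: every sequence in `W`
that is Cauchy with respect to `d_R` has a limit in `W` with respect to `d_R`. -/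
theorem stmt1 {H : Type*} [NormedAddCommGroup H] [InnerProductSpace ℝ H] [CompleteSpace H]
    (R W : Set H) (hR : Bornology.IsBounded R)
    (hW : IsCompact (toWeakSpace ℝ H '' W))
    (a : ℕ → H) (ha : ∀ n, a n ∈ W)
    (hCauchy : ∀ ε > 0, ∃ N : ℕ, ∀ m ≥ N, ∀ n ≥ N, dR R (a m) (a n) < ε) :
    ∃ x ∈ W, Tendsto (fun n => dR R (a n) x) atTop (nhds 0) := by
  -- extract a weak cluster point of the sequence
  obtain ⟨y, hy, hcl⟩ := hW.exists_mapClusterPt (f := atTop)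
    (u := fun n => toWeakSpace ℝ H (a n))
    (Filter.le_principal_iff.mpr (Filter.mem_map.mpr (Filter.Eventually.of_forall fun n => ⟨a n, ha n, rfl⟩)))
  obtain ⟨x, hxW, rfl⟩ := hy
  refine ⟨x, hxW, ?_⟩
  -- evaluation against a fixed vector r is weakly continuous
  have heval : ∀ r : H, Continuous fun z : WeakSpace ℝ H => ⟪r, (toWeakSpace ℝ H).symm z⟫_ℝ :=
    fun r => WeakBilin.eval_continuous ((topDualPairing ℝ H).flip) (innerSL ℝ r)
  have hnonneg : ∀ n, 0 ≤ dR R (a n) x := by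
    intro n
    rcases R.eq_empty_or_nonempty with h | ⟨r, hr⟩
    · subst h
      simp [dR, normR, Real.iSup_of_isEmpty]
    · exact le_trans (abs_nonneg _) (abs_inner_le_normR hR hr _)
  rw [Metric.tendsto_atTop]
  intro ε hε
  obtain ⟨N, hN⟩ := hCauchy (ε / 2) (by linarith)
  refine ⟨N, fun n hn => ?_⟩
  rw [Real.dist_eq, sub_zero, abs_of_nonneg (hnonneg n)]
  have key : dR R (a n) x ≤ ε / 2 := by
    refine Real.iSup_le (fun r => ?_) (by linarith)
    -- it suffices to show |⟪r, a n - x⟫| < ε/2 + δ for all δ > 0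
    refine le_of_forall_pos_le_add (fun δ hδ => ?_)
    -- the set of points weakly δ-close to x in direction r is a neighborhood of x
    have hU : {z : WeakSpace ℝ H | |⟪(r : H), (toWeakSpace ℝ H).symm z - x⟫_ℝ| < δ} ∈
        nhds (toWeakSpace ℝ H x) := by
      have hc : Continuous fun z : WeakSpace ℝ H =>
          |⟪(r : H), (toWeakSpace ℝ H).symm z - x⟫_ℝ| := by
        have h := ((heval (r : H)).sub (continuous_const (y := ⟪(r : H), x⟫_ℝ))).abs
        simpa [inner_sub_right] using h
      have : IsOpen {z : WeakSpace ℝ H | |⟪(r : H), (toWeakSpace ℝ H).symm z - x⟫_ℝ| < δ} :=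
        isOpen_lt hc continuous_const
      refine this.mem_nhds ?_
      simp [hδ]
    have hfreq := (mapClusterPt_iff_frequently.mp hcl) _ hU
    obtain ⟨m, hmN, hm⟩ := (hfreq.and_eventually (eventually_ge_atTop N)).exists
    simp only [Set.mem_setOf_eq] at hmN
    have h1 : |⟪(r : H), a n - a m⟫_ℝ| ≤ normR R (a n - a m) := abs_inner_le_normR hR r.2 _
    have h2 : normR R (a n - a m) < ε / 2 := hN n hn m hm
    have h3 : |⟪(r : H), a m - x⟫_ℝ| < δ := by simpa using hmN
    calc |⟪(r : H), a n - x⟫_ℝ|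
        ≤ |⟪(r : H), a n - a m⟫_ℝ| + |⟪(r : H), a m - x⟫_ℝ| := by
          have : ⟪(r : H), a n - x⟫_ℝ = ⟪(r : H), a n - a m⟫_ℝ + ⟪(r : H), a m - x⟫_ℝ := by
            rw [← inner_add_right, sub_add_sub_cancel]
          rw [this]; exact abs_add_le _ _
      _ ≤ ε / 2 + δ := by linarith
  linarith
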